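/- Let S be a stochastic flow on a Polish space (X,d) over (Ω,𝓕,ℙ), and let A(t,ω) ⊆ X be a compact forward invariant family: there is a full-measure set Ω₀ ∈ 𝓕, on which the flow identities (i), (ii), (iv) hold, such that (a) for each x ∈ X and t ∈ ℝ the map ω ↦ d(x, A(t,ω)) is Borel measurable; (b) for each ω ∈ Ω₀ and t ∈ ℝ the set A(t,ω) is nonempty and compact; (c) for each ω ∈ Ω₀ and s ≤ t, S(t,s;ω)A(s,ω) ⊆ A(t,ω). Then there exist measurable maps x_t : Ω₀ → X, t ∈ ℝ, such that x_t(ω) ∈ A(t,ω) and S(t,s;ω)x_s(ω) = x_t(ω) for all ω ∈ Ω₀ and all −∞ < s ≤ t < ∞. -/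

import Mathlib

open MeasureTheory Filter Topology

/-- A stochastic flow on a metric space `X` over a probability space `(Ω, 𝓕, ℙ)`:
a family of maps `S t s ω : X → X` (for `s ≤ t`) satisfying, for `ℙ`-a.e. `ω`,
the cocycle property, continuity in `x`, the identity at equal times, and a joint
measurability condition in `(s, ω)` on `(-∞, t] × Ω`. -/
def IsStochasticFlow {Ω X : Type*} [MeasurableSpace Ω] [MetricSpace X]
    [MeasurableSpace X] [BorelSpace X]
    (ℙ : Measure Ω) (S : ℝ → ℝ → Ω → X → X) : Prop :=
  (∀ᵐ ω ∂ℙ,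
    (∀ s r t : ℝ, s ≤ r → r ≤ t → ∀ x : X, S t r ω (S r s ω x) = S t s ω x) ∧
    (∀ s t : ℝ, s ≤ t → Continuous fun x : X => S t s ω x) ∧
    (∀ t : ℝ, ∀ x : X, S t t ω x = x)) ∧
  (∀ t : ℝ, ∀ x : X, Measurable fun p : {s : ℝ // s ≤ t} × Ω => S t p.1.1 p.2 x)

/-- `K` is an attracting set at time `t` for the sample point `ω`: every nonempty
bounded set `B` satisfies `d(S(t,s;ω)B, K) → 0` as `s → -∞`, where
`d(A,B) = sup_{x ∈ A} inf_{y ∈ B} d(x,y)` (formulated with `EMetric.infEdist`). -/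
def Attracts {Ω X : Type*} [MetricSpace X]
    (S : ℝ → ℝ → Ω → X → X) (t : ℝ) (ω : Ω) (K : Set X) : Prop :=
  ∀ B : Set X, B.Nonempty → Bornology.IsBounded B →
    Tendsto (fun s : ℝ => ⨆ x ∈ B, EMetric.infEdist (S t s ω x) K) atBot (𝓝 0)

/-- The stochastic flow `S` is asymptotically compact with compact attracting sets `K t ω`
on a full-measure set `Ω₀`. -/
def IsAsymptoticallyCompact {Ω X : Type*} [MeasurableSpace Ω] [MetricSpace X]
    (ℙ : Measure Ω) (S : ℝ → ℝ → Ω → X → X) : Prop :=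
  ∃ Ω₀ : Set Ω, MeasurableSet Ω₀ ∧ ℙ Ω₀ = 1 ∧
    ∀ ω ∈ Ω₀, ∀ t : ℝ, ∃ K : Set X, IsCompact K ∧ Attracts S t ω K

/-- An evolution system of measures for the stochastic flow `S`: a family of probability
measures `μ t` on `Ω × X` with marginal `ℙ` on `Ω`, such that the image of `μ s` under
`(ω, x) ↦ (ω, S t s ω x)` is `μ t` whenever `s ≤ t`. -/
def IsEvolutionSystem {Ω X : Type*} [MeasurableSpace Ω] [MeasurableSpace X]
    (ℙ : Measure Ω) (S : ℝ → ℝ → Ω → X → X) (μ : ℝ → Measure (Ω × X)) : Prop :=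
  (∀ t : ℝ, IsProbabilityMeasure (μ t)) ∧
  (∀ t : ℝ, (μ t).map Prod.fst = ℙ) ∧
  (∀ s t : ℝ, s ≤ t → (μ s).map (fun p : Ω × X => (p.1, S t s p.1 p.2)) = μ t)

section AuxiliaryLemmas

open Metric EMetric Set
attribute [local instance] Classical.propDecidable

/-- Dependent-choice style sequence construction. -/
lemma seq_choice' {β : Type*} (P : ℕ → β → Prop) (R : ℕ → β → β → Prop)
    (h0 : ∃ b, P 0 b) (hs : ∀ n b, P n b → ∃ c, P (n + 1) c ∧ R n b c) :
    ∃ f : ℕ → β, (∀ n, P n (f n)) ∧ ∀ n, R n (f n) (f (n + 1)) := by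
  let aux : ∀ n : ℕ, { b // P n b } := fun n =>
    Nat.rec ⟨h0.choose, h0.choose_spec⟩
      (fun n ih => ⟨(hs n ih.1 ih.2).choose, (hs n ih.1 ih.2).choose_spec.1⟩) n
  exact ⟨fun n => (aux n).1, fun n => (aux n).2,
    fun n => (hs n (aux n).1 (aux n).2).choose_spec.2⟩


variable {X Y : Type*} [MetricSpace X] [MetricSpace Y]

lemma antitone_of_succ {K : ℕ → Set X} (h : ∀ k, K (k + 1) ⊆ K k) : Antitone K := by
  intro i j hij
  induction j, hij using Nat.le_induction with
  | base => exact fun x hx => hx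
  | succ n hn ih => exact ih.trans' (h n)

lemma infEdist_iInter_antitone {K : ℕ → Set X} (hc : ∀ k, IsCompact (K k))
    (hstep : ∀ k, K (k + 1) ⊆ K k) (hne : ∀ k, (K k).Nonempty) (x : X) :
    infEdist x (⋂ k, K k) = ⨆ k, infEdist x (K k) := by
  have hanti := antitone_of_succ hstep
  refine le_antisymm ?_ (iSup_le fun k => infEdist_anti (iInter_subset K k))
  choose y hyK hy using fun k => (hc k).exists_infEdist_eq_edist (hne k) x
  have hy0 : ∀ k, y k ∈ K 0 := fun k => hanti (Nat.zero_le k) (hyK k)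
  obtain ⟨p, hp0, φ, hφ, hφt⟩ := (hc 0).tendsto_subseq hy0
  have hpmem : p ∈ ⋂ k, K k := by
    refine mem_iInter.2 fun j => ?_
    have : ∀ᶠ k in atTop, y (φ k) ∈ K j := by
      filter_upwards [eventually_ge_atTop j] with k hk
      exact hanti (hk.trans (hφ.le_apply)) (hyK (φ k))
    exact (hc j).isClosed.mem_of_tendsto hφt this
  refine (infEdist_le_edist_of_mem hpmem).trans ?_
  have hten : Tendsto (fun k => edist x (y (φ k))) atTop (𝓝 (edist x p)) :=
    (continuous_const.edist continuous_id).continuousAt.tendsto.comp hφt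
  refine le_of_tendsto hten (Eventually.of_forall fun k => ?_)
  rw [← hy (φ k)]
  exact le_iSup (fun k => infEdist x (K k)) (φ k)

lemma image_iInter_antitone {f : X → Y} (hf : Continuous f) {K : ℕ → Set X}
    (hc : ∀ k, IsCompact (K k)) (hstep : ∀ k, K (k + 1) ⊆ K k) :
    ⋂ k, f '' K k = f '' ⋂ k, K k := by
  refine Subset.antisymm ?_ ?_
  · intro y hy
    have hC : (⋂ k, K k ∩ f ⁻¹' {y}).Nonempty := by
      refine IsCompact.nonempty_iInter_of_sequence_nonempty_isCompact_isClosed _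
        (fun k => inter_subset_inter_left _ (hstep k)) (fun k => ?_)
        ((hc 0).inter_right ((isClosed_singleton.preimage hf)))
        (fun k => ((hc k).inter_right ((isClosed_singleton.preimage hf))).isClosed)
      obtain ⟨x, hx, hfx⟩ := mem_iInter.1 hy k
      exact ⟨x, hx, by simpa using hfx⟩
    obtain ⟨x, hx⟩ := hC
    have hx1 := mem_iInter.1 hx
    exact ⟨x, mem_iInter.2 fun k => (hx1 k).1, by simpa using (hx1 0).2⟩
  · rintro _ ⟨x, hx, rfl⟩
    exact mem_iInter.2 fun k => ⟨x, mem_iInter.1 hx k, rfl⟩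

lemma infEdist_image_dense {f : X → Y} (hf : Continuous f) {K : Set X} {ι : Type*}
    [Nonempty ι] {c : ι → X} (hmem : ∀ i, c i ∈ K) (hdense : K ⊆ closure (range c)) (y : Y) :
    infEdist y (f '' K) = ⨅ i, edist y (f (c i)) := by
  have h1 : range (f ∘ c) ⊆ f '' K := by
    rintro _ ⟨i, rfl⟩; exact ⟨c i, hmem i, rfl⟩
  have h2 : f '' K ⊆ closure (range (f ∘ c)) := by
    calc f '' K ⊆ f '' closure (range c) := image_mono hdense
    _ ⊆ closure (f '' range c) := hf.continuousOn.image_closure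
    _ = closure (range (f ∘ c)) := by rw [range_comp]
  have hr : (⨅ i, edist y (f (c i))) = infEdist y (range (f ∘ c)) := by
    rw [infEdist, infEDist, iInf_range]; rfl
  refine le_antisymm ?_ ?_
  · rw [hr]
    exact infEdist_anti h1
  · rw [hr, infEdist, ← infEdist_closure]
    exact infEdist_anti h2


lemma infEdist_image_inter_open {f : X → Y} (hf : Continuous f) {K U : Set X}
    (hU : IsOpen U) {ι : Type*} [Nonempty ι] {c : ι → X} (hmem : ∀ i, c i ∈ K)
    (hdense : K ⊆ closure (range c)) (y : Y) :
    infEdist y (f '' (K ∩ U)) = ⨅ i, if c i ∈ U then edist y (f (c i)) else ⊤ := by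
  have key : ∀ i, (if c i ∈ U then edist y (f (c i)) else ⊤)
      = infEdist y (if c i ∈ U then {f (c i)} else ∅) := by
    intro i
    by_cases h : c i ∈ U <;> simp [h, infEdist]
  simp_rw [key]
  rw [infEdist, ← infEdist_iUnion]
  have hTsub : (⋃ i, if c i ∈ U then {f (c i)} else (∅ : Set Y)) ⊆ f '' (K ∩ U) := by
    refine iUnion_subset fun i => ?_
    by_cases h : c i ∈ U
    · simp only [if_pos h, singleton_subset_iff]
      exact ⟨c i, ⟨hmem i, h⟩, rfl⟩
    · simp [if_neg h]
  have hsub2 : f '' (K ∩ U) ⊆ closure (⋃ i, if c i ∈ U then {f (c i)} else (∅ : Set Y)) := by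
    rintro _ ⟨x, ⟨hxK, hxU⟩, rfl⟩
    rw [Metric.mem_closure_iff]
    intro ε hε
    obtain ⟨δ, hδ, hball⟩ := Metric.isOpen_iff.1 hU x hxU
    obtain ⟨δ', hδ', hcontx⟩ := Metric.continuous_iff.1 hf x ε hε
    obtain ⟨z, hzr, hzd⟩ := Metric.mem_closure_iff.1 (hdense hxK) (min δ δ') (lt_min hδ hδ')
    obtain ⟨i, rfl⟩ := hzr
    have hiU : c i ∈ U := hball (by rw [Metric.mem_ball, dist_comm]; exact hzd.trans_le (min_le_left _ _))
    refine ⟨f (c i), ?_, ?_⟩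
    · exact mem_iUnion.2 ⟨i, by simp [if_pos hiU]⟩
    · rw [dist_comm]
      exact hcontx _ (by rw [dist_comm]; exact hzd.trans_le (min_le_right _ _))
  refine le_antisymm (infEdist_anti hTsub) ?_
  rw [← infEdist_closure]
  exact infEdist_anti hsub2

lemma exists_measurable_selection {α X : Type*} [MeasurableSpace α] [MetricSpace X]
    [CompleteSpace X] [TopologicalSpace.SeparableSpace X] [MeasurableSpace X]
    [BorelSpace X]
    (F : α → Set X) (hcl : ∀ a, IsClosed (F a)) (hne : ∀ a, (F a).Nonempty)
    (hm : ∀ x : X, Measurable fun a => infDist x (F a)) (v : X) {ε : ℝ} (hε : 0 < ε) :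
    ∃ f : α → X, Measurable f ∧ (∀ a, f a ∈ F a) ∧
      ∀ a, dist v (f a) ≤ infDist v (F a) + ε := by
  classical
  have : Nonempty X := ⟨v⟩
  obtain ⟨u, hu⟩ := TopologicalSpace.exists_dense_seq X
  rw [Metric.denseRange_iff] at hu
  set δ := ε / 5 with hδdef
  have hδ : 0 < δ := by positivity
  set q : ℝ := 2⁻¹ with hq
  have hq0 : 0 < q := by norm_num
  have hq1 : q < 1 := by norm_num
  have hqpow : ∀ n : ℕ, 0 < q ^ n := fun n => pow_pos hq0 n
  set P : ℕ → (α → X) → Prop := fun n g => Measurable g ∧ ∀ a,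
      infDist (g a) (F a) < δ * q ^ n ∧
      dist v (g a) ≤ infDist v (F a) + 5 * δ - 4 * δ * q ^ n with hP
  set R : ℕ → (α → X) → (α → X) → Prop :=
      fun n g g' => ∀ a, dist (g a) (g' a) ≤ 2 * δ * q ^ n with hR
  -- a helper to build measurable `Nat.find` based selections
  have find_meas : ∀ (Q : α → ℕ → Prop), (∀ k : ℕ, MeasurableSet {a' | Q a' k}) →
      (∀ a, ∃ k, Q a k) → ∃ g : α → X, Measurable g ∧ ∀ a, ∃ k, Q a k ∧ g a = u k := by
    intro Q hQ hex
    have h1 : Measurable fun a => Nat.find (hex a) := by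
      apply measurable_to_countable'
      intro k
      have : (fun a => Nat.find (hex a)) ⁻¹' {k} =
          {a | Q a k} ∩ ⋂ j ∈ Finset.range k, {a | Q a j}ᶜ := by
        ext a
        simp only [mem_preimage, mem_singleton_iff, Nat.find_eq_iff, mem_inter_iff,
          mem_iInter, Finset.mem_range, mem_setOf_eq, mem_compl_iff]
      rw [this]
      exact (hQ k).inter
        (MeasurableSet.biInter (Set.to_countable _) fun j _ => (hQ j).compl)
    exact ⟨fun a => u (Nat.find (hex a)), (measurable_of_countable u).comp h1,
      fun a => ⟨Nat.find (hex a), Nat.find_spec (hex a), rfl⟩⟩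
  have h0 : ∃ g, P 0 g := by
    have hex : ∀ a, ∃ k, dist (u k) v < infDist v (F a) + δ ∧ infDist (u k) (F a) < δ := by
      intro a
      obtain ⟨y, hyF, hyd⟩ := (infDist_lt_iff (hne a)).1
        (lt_add_of_pos_right _ (by positivity : (0:ℝ) < δ * q))
      obtain ⟨k, hk⟩ := hu y (δ * q) (by positivity)
      refine ⟨k, ?_, ?_⟩
      · calc dist (u k) v ≤ dist (u k) y + dist y v := dist_triangle _ _ _
          _ < δ * q + (infDist v (F a) + δ * q) := by
              rw [dist_comm (u k) y, dist_comm y v]; exact add_lt_add hk hyd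
          _ = infDist v (F a) + δ := by rw [hq]; ring
      · calc infDist (u k) (F a) ≤ dist (u k) y := infDist_le_dist_of_mem hyF
          _ < δ * q := by rw [dist_comm]; exact hk
          _ < δ := by rw [hq]; linarith
    obtain ⟨g, hgm, hgs⟩ := find_meas _ (fun k => MeasurableSet.inter
        (measurableSet_lt measurable_const ((hm v).add_const δ))
        (measurableSet_lt (hm (u k)) measurable_const)) hex
    refine ⟨g, hgm, fun a => ?_⟩
    obtain ⟨k, ⟨h1, h2⟩, hk⟩ := hgs a
    simp only [mem_setOf_eq] at h1 h2
    rw [hk]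
    constructor
    · simpa using h2
    · rw [dist_comm]
      simp only [pow_zero]
      linarith
  have hstep : ∀ n g, P n g → ∃ g', P (n + 1) g' ∧ R n g g' := by
    intro n g hg
    have hex : ∀ a, ∃ k, dist (u k) (g a) < 2 * δ * q ^ n ∧
        infDist (u k) (F a) < δ * q ^ (n + 1) := by
      intro a
      obtain ⟨y, hyF, hyd⟩ := (infDist_lt_iff (hne a)).1 ((hg.2 a).1)
      obtain ⟨k, hk⟩ := hu y (δ * q ^ (n + 1)) (by positivity)
      refine ⟨k, ?_, ?_⟩
      · calc dist (u k) (g a) ≤ dist (u k) y + dist y (g a) := dist_triangle _ _ _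
          _ < δ * q ^ (n + 1) + δ * q ^ n := by
              rw [dist_comm (u k) y, dist_comm y (g a)]; exact add_lt_add hk hyd
          _ ≤ 2 * δ * q ^ n := by
              have : q ^ (n + 1) ≤ q ^ n := by
                rw [pow_succ]; nlinarith [hqpow n]
              nlinarith [hqpow n]
      · calc infDist (u k) (F a) ≤ dist (u k) y := infDist_le_dist_of_mem hyF
          _ < δ * q ^ (n + 1) := by rw [dist_comm]; exact hk
    obtain ⟨g', hgm', hgs'⟩ := find_meas _ (fun k => MeasurableSet.inter
        (measurableSet_lt (measurable_const.dist hg.1) measurable_const)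
        (measurableSet_lt (hm (u k)) measurable_const)) hex
    refine ⟨g', ⟨hgm', fun a => ?_⟩, fun a => ?_⟩
    · obtain ⟨k, ⟨h1, h2⟩, hk⟩ := hgs' a
      simp only [mem_setOf_eq] at h1 h2
      rw [hk]
      refine ⟨h2, ?_⟩
      have h3 := (hg.2 a).2
      have h4 : dist v (u k) ≤ dist v (g a) + dist (g a) (u k) := dist_triangle _ _ _
      rw [dist_comm (u k) (g a)] at h1
      have hpow : 4 * δ * q ^ (n + 1) = 2 * δ * q ^ n := by
        rw [pow_succ, hq]; ring
      linarith
    · obtain ⟨k, ⟨h1, _⟩, hk⟩ := hgs' a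
      simp only [mem_setOf_eq] at h1
      rw [dist_comm] at h1
      rw [hk]
      exact h1.le
  obtain ⟨g, hPg, hRg⟩ := seq_choice' P R h0 hstep
  have hcauchy : ∀ a, ∃ x, Tendsto (fun n => g n a) atTop (𝓝 x) := by
    intro a
    refine cauchySeq_tendsto_of_complete (cauchySeq_of_le_geometric q (2 * δ) hq1 fun n => ?_)
    calc dist (g n a) (g (n + 1) a) ≤ 2 * δ * q ^ n := hRg n a
      _ = 2 * δ * q ^ n := rfl
  choose f hf using hcauchy
  have hq0' : Tendsto (fun n : ℕ => δ * q ^ n) atTop (𝓝 0) := by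
    have := tendsto_pow_atTop_nhds_zero_of_lt_one hq0.le hq1
    simpa using this.const_mul δ
  refine ⟨f, ?_, fun a => ?_, fun a => ?_⟩
  · exact measurable_of_tendsto_metrizable (fun n => (hPg n).1) (tendsto_pi_nhds.2 hf)
  · have h1 : Tendsto (fun n => infDist (g n a) (F a)) atTop (𝓝 (infDist (f a) (F a))) :=
      ((continuous_infDist_pt (F a)).tendsto _).comp (hf a)
    have h2 : infDist (f a) (F a) ≤ 0 :=
      le_of_tendsto_of_tendsto' h1 hq0' fun n => ((hPg n).2 a).1.le
    exact ((hcl a).mem_iff_infDist_zero (hne a)).2 (le_antisymm h2 infDist_nonneg)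
  · have h1 : Tendsto (fun n => dist v (g n a)) atTop (𝓝 (dist v (f a))) :=
      tendsto_const_nhds.dist (hf a)
    refine le_of_tendsto h1 (Eventually.of_forall fun n => ?_)
    have h2 := ((hPg n).2 a).2
    have h3 : 0 ≤ 4 * δ * q ^ n := by positivity
    have : 5 * δ = ε := by rw [hδdef]; ring
    linarith

lemma exists_castaing {α X : Type*} [MeasurableSpace α] [MetricSpace X]
    [CompleteSpace X] [TopologicalSpace.SeparableSpace X] [MeasurableSpace X]
    [BorelSpace X] [Nonempty X]
    (F : α → Set X) (hcl : ∀ a, IsClosed (F a)) (hne : ∀ a, (F a).Nonempty)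
    (hm : ∀ x : X, Measurable fun a => infDist x (F a)) :
    ∃ σ : ℕ × ℕ → α → X, (∀ p, Measurable (σ p)) ∧ (∀ p a, σ p a ∈ F a) ∧
      ∀ a, F a ⊆ closure (range fun p => σ p a) := by
  obtain ⟨u, hu⟩ := TopologicalSpace.exists_dense_seq X
  rw [Metric.denseRange_iff] at hu
  have hsel : ∀ p : ℕ × ℕ, ∃ f : α → X, Measurable f ∧ (∀ a, f a ∈ F a) ∧
      ∀ a, dist (u p.1) (f a) ≤ infDist (u p.1) (F a) + 1 / (p.2 + 1) := by
    intro p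
    exact exists_measurable_selection F hcl hne hm (u p.1) (by positivity)
  choose σ hσm hσF hσd using hsel
  refine ⟨σ, hσm, hσF, fun a x hx => ?_⟩
  rw [Metric.mem_closure_iff]
  intro ε hε
  obtain ⟨j, hj⟩ := exists_nat_one_div_lt (show (0:ℝ) < ε / 3 by linarith)
  obtain ⟨k, hk⟩ := hu x (ε / 3) (by linarith)
  refine ⟨σ (k, j) a, ⟨(k, j), rfl⟩, ?_⟩
  have h1 : infDist (u k) (F a) ≤ dist (u k) x := infDist_le_dist_of_mem hx
  have h2 := hσd (k, j) a
  have h3 : dist x (σ (k, j) a) ≤ dist x (u k) + dist (u k) (σ (k, j) a) := dist_triangle _ _ _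
  rw [dist_comm (u k) x] at h1
  simp only at h2
  have hj' : 1 / ((j:ℝ) + 1) < ε / 3 := by exact_mod_cast hj
  linarith

lemma flow_selection {α X : Type*} [MeasurableSpace α] [MetricSpace X] [CompleteSpace X]
    [TopologicalSpace.SeparableSpace X] [MeasurableSpace X] [BorelSpace X] [Nonempty X]
    (T : ℝ → ℝ → α → X → X) (A' : ℝ → α → Set X)
    (hco : ∀ (a : α) (s r t : ℝ), s ≤ r → r ≤ t → ∀ x, T t r a (T r s a x) = T t s a x)
    (hcont : ∀ (a : α) (s t : ℝ), s ≤ t → Continuous (T t s a))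
    (hid : ∀ (a : α) (t : ℝ) (x : X), T t t a x = x)
    (hTmeas : ∀ (t s : ℝ), s ≤ t → ∀ z : α → X, Measurable z →
      Measurable fun a => T t s a (z a))
    (hAne : ∀ (a : α) (t : ℝ), (A' t a).Nonempty)
    (hAcp : ∀ (a : α) (t : ℝ), IsCompact (A' t a))
    (hAinv : ∀ (a : α) (s t : ℝ), s ≤ t → T t s a '' A' s a ⊆ A' t a)
    (hAmeas : ∀ (x : X) (t : ℝ), Measurable fun a => infDist x (A' t a)) :
    ∃ x : ℝ → α → X, (∀ t, Measurable (x t)) ∧ (∀ (a : α) (t : ℝ), x t a ∈ A' t a) ∧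
      ∀ (a : α) (s t : ℝ), s ≤ t → T t s a (x s a) = x t a := by
  classical
  have hkc : ∀ (t : ℝ) (k : ℕ), t - ((k : ℝ) + 1) ≤ t := by
    intro t k
    have : (0:ℝ) ≤ (k:ℝ) := Nat.cast_nonneg k
    linarith
  -- Castaing representations of `A'`
  have hcast : ∀ s : ℝ, ∃ σ : ℕ × ℕ → α → X, (∀ p, Measurable (σ p)) ∧
      (∀ p a, σ p a ∈ A' s a) ∧ ∀ a, A' s a ⊆ closure (range fun p => σ p a) :=
    fun s => exists_castaing _ (fun a => (hAcp a s).isClosed) (fun a => hAne a s)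
      (fun x => hAmeas x s)
  choose σ hσm hσA hσd using hcast
  -- monotonicity of images
  have himg : ∀ (a : α) (s s' t : ℝ), s ≤ s' → s' ≤ t →
      T t s a '' A' s a ⊆ T t s' a '' A' s' a := by
    intro a s s' t h1 h2
    rintro _ ⟨x, hx, rfl⟩
    exact ⟨T s' s a x, hAinv a s s' h1 ⟨x, hx, rfl⟩, hco a s s' t h1 h2 x⟩
  -- the "eternal reachable" sets
  set D : ℝ → ℕ → α → Set X := fun t k a => T t (t - ((k:ℝ) + 1)) a '' A' (t - ((k:ℝ) + 1)) a
    with hDdef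
  set Fs : ℝ → α → Set X := fun t a => ⋂ k, D t k a with hFsdef
  have hDcp : ∀ (t : ℝ) (k : ℕ) (a : α), IsCompact (D t k a) :=
    fun t k a => (hAcp a _).image (hcont a _ t (hkc t k))
  have hDne : ∀ (t : ℝ) (k : ℕ) (a : α), (D t k a).Nonempty :=
    fun t k a => (hAne a _).image _
  have hDstep : ∀ (t : ℝ) (k : ℕ) (a : α), D t (k + 1) a ⊆ D t k a := by
    intro t k a
    have hcast1 : ((k + 1 : ℕ) : ℝ) = (k : ℝ) + 1 := by push_cast; ring
    have h1 : t - (((k + 1 : ℕ) : ℝ) + 1) ≤ t - ((k:ℝ) + 1) := by rw [hcast1]; linarith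
    exact himg a _ _ t h1 (hkc t k)
  have hDsub : ∀ (t : ℝ) (k : ℕ) (a : α), D t k a ⊆ A' t a :=
    fun t k a => hAinv a _ t (hkc t k)
  have hFcp : ∀ (t : ℝ) (a : α), IsCompact (Fs t a) := by
    intro t a
    exact (hDcp t 0 a).of_isClosed_subset
      (isClosed_iInter fun k => (hDcp t k a).isClosed) (iInter_subset _ 0)
  have hFne : ∀ (t : ℝ) (a : α), (Fs t a).Nonempty := by
    intro t a
    exact IsCompact.nonempty_iInter_of_sequence_nonempty_isCompact_isClosed _
      (hDstep t · a) (hDne t · a) (hDcp t 0 a) (fun k => (hDcp t k a).isClosed)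
  have hFsubA : ∀ (t : ℝ) (a : α), Fs t a ⊆ A' t a :=
    fun t a => (iInter_subset _ 0).trans (hDsub t 0 a)
  have hFmem : ∀ (a : α) (t : ℝ), ∀ y ∈ Fs t a, ∀ r ≤ t, y ∈ T t r a '' A' r a := by
    intro a t y hy r hr
    obtain ⟨k, hk⟩ : ∃ k : ℕ, t - ((k:ℝ) + 1) ≤ r := by
      refine ⟨⌈t - r⌉₊, ?_⟩
      have := Nat.le_ceil (t - r)
      linarith
    exact himg a _ r t hk hr (mem_iInter.1 hy k)
  have hFsurj : ∀ (a : α) (s t : ℝ), s ≤ t → ∀ y ∈ Fs t a,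
      ∃ w, w ∈ Fs s a ∧ T t s a w = y := by
    intro a s t hst y hy
    have hCne : ∀ k : ℕ, (D s k a ∩ T t s a ⁻¹' {y}).Nonempty := by
      intro k
      obtain ⟨x, hx, hxy⟩ := hFmem a t y hy (s - ((k:ℝ) + 1)) ((hkc s k).trans hst)
      refine ⟨T s (s - ((k:ℝ) + 1)) a x, ⟨x, hx, rfl⟩, ?_⟩
      simp only [mem_preimage, mem_singleton_iff]
      rw [hco a _ s t (hkc s k) hst x, hxy]
    have hCcp : ∀ k : ℕ, IsCompact (D s k a ∩ T t s a ⁻¹' {y}) := fun k =>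
      (hDcp s k a).inter_right (isClosed_singleton.preimage (hcont a s t hst))
    obtain ⟨w, hw⟩ := IsCompact.nonempty_iInter_of_sequence_nonempty_isCompact_isClosed _
      (fun k => inter_subset_inter_left _ (hDstep s k a)) hCne (hCcp 0)
      (fun k => (hCcp k).isClosed)
    have hw' := mem_iInter.1 hw
    refine ⟨w, mem_iInter.2 fun k => (hw' k).1, ?_⟩
    have := (hw' 0).2
    simpa using this
  -- measurability of infEdist to the D and Fs sets
  have hDmeasE : ∀ (x : X) (t : ℝ) (k : ℕ),
      Measurable fun a => EMetric.infEdist x (D t k a) := by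
    intro x t k
    have heq : ∀ a, EMetric.infEdist x (D t k a) =
        ⨅ p : ℕ × ℕ, edist x (T t (t - ((k:ℝ) + 1)) a (σ (t - ((k:ℝ) + 1)) p a)) := by
      intro a
      exact infEdist_image_dense (hcont a _ t (hkc t k)) (fun p => hσA _ p a) (hσd _ a) x
    simp_rw [heq]
    exact Measurable.iInf fun p => measurable_const.edist
      (hTmeas t _ (hkc t k) _ (hσm _ p))
  have hFmeasE : ∀ (x : X) (t : ℝ), Measurable fun a => EMetric.infEdist x (Fs t a) := by
    intro x t
    have heq : ∀ a, EMetric.infEdist x (Fs t a) = ⨆ k, EMetric.infEdist x (D t k a) :=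
      fun a => infEdist_iInter_antitone (hDcp t · a) (hDstep t · a) (hDne t · a) x
    simp_rw [heq]
    exact Measurable.iSup fun k => hDmeasE x t k
  have hFmeasD : ∀ (x : X) (t : ℝ), Measurable fun a => infDist x (Fs t a) := by
    intro x t
    exact ENNReal.measurable_toReal.comp (hFmeasE x t)
  -- the recursive construction of the trajectory at integer times τ m = -m
  set τ : ℕ → ℝ := fun m => -(m : ℝ) with hτdef
  have hτanti : ∀ {m m' : ℕ}, m ≤ m' → τ m' ≤ τ m := by
    intro m m' h
    simp only [hτdef, neg_le_neg_iff, Nat.cast_le]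
    exact_mod_cast h
  set P : ℕ → (α → X) → Prop := fun m z => Measurable z ∧ ∀ a, z a ∈ Fs (τ m) a with hPdef
  set R : ℕ → (α → X) → (α → X) → Prop :=
    fun m z z' => ∀ a, T (τ m) (τ (m + 1)) a (z' a) = z a with hRdef
  have h0 : ∃ z, P 0 z := by
    obtain ⟨f, hfm, hfF, _⟩ := exists_measurable_selection (Fs (τ 0))
      (fun a => (hFcp (τ 0) a).isClosed) (fun a => hFne (τ 0) a) (fun x => hFmeasD x (τ 0))
      (Classical.arbitrary X) one_pos
    exact ⟨f, hfm, hfF⟩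
  have hstep : ∀ m z, P m z → ∃ z', P (m + 1) z' ∧ R m z z' := by
    intro m z hz
    have hττ : τ (m + 1) ≤ τ m := hτanti (Nat.le_succ m)
    set G : α → Set X := fun a => Fs (τ (m + 1)) a ∩ T (τ m) (τ (m + 1)) a ⁻¹' {z a}
      with hGdef
    have hGcl : ∀ a, IsClosed (G a) := fun a =>
      ((hFcp _ a).isClosed).inter (isClosed_singleton.preimage (hcont a _ _ hττ))
    have hGne : ∀ a, (G a).Nonempty := by
      intro a
      obtain ⟨w, hwF, hweq⟩ := hFsurj a (τ (m + 1)) (τ m) hττ (z a) (hz.2 a)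
      exact ⟨w, hwF, by simpa using hweq⟩
    -- measurability of infDist to G
    have hGmeasE : ∀ x : X, Measurable fun a => EMetric.infEdist x (G a) := by
      intro x
      set τ' : ℝ := τ (m + 1) with hτ'def
      set sk : ℕ → ℝ := fun k => τ' - ((k:ℝ) + 1) with hskdef
      have hsτ' : ∀ k, sk k ≤ τ' := fun k => hkc τ' k
      have hsτm : ∀ k, sk k ≤ τ m := fun k => (hsτ' k).trans hττ
      set E : ℕ → α → Set X := fun k a => D τ' k a ∩ T (τ m) τ' a ⁻¹' {z a} with hEdef
      have hGE : ∀ a, G a = ⋂ k, E k a := by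
        intro a
        show Fs τ' a ∩ T (τ m) τ' a ⁻¹' {z a} = _
        rw [hFsdef]
        exact iInter_inter _ _
      have hEcp : ∀ k a, IsCompact (E k a) := fun k a =>
        (hDcp τ' k a).inter_right (isClosed_singleton.preimage (hcont a τ' (τ m) hττ))
      have hEstep : ∀ k a, E (k + 1) a ⊆ E k a := fun k a =>
        inter_subset_inter_left _ (hDstep τ' k a)
      have hEne : ∀ k a, (E k a).Nonempty := by
        intro k a
        refine (hGne a).mono ?_
        rw [hGE a]
        exact iInter_subset _ k
      have hEimg : ∀ k a, E k a =
          T τ' (sk k) a '' (A' (sk k) a ∩ {w | T (τ m) (sk k) a w = z a}) := by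
        intro k a
        ext y
        constructor
        · rintro ⟨⟨w, hw, rfl⟩, hpre⟩
          simp only [mem_preimage, mem_singleton_iff] at hpre
          rw [hco a (sk k) τ' (τ m) (hsτ' k) hττ w] at hpre
          exact ⟨w, ⟨hw, hpre⟩, rfl⟩
        · rintro ⟨w, ⟨hw, hweq⟩, rfl⟩
          refine ⟨⟨w, hw, rfl⟩, ?_⟩
          simp only [mem_preimage, mem_singleton_iff]
          rw [hco a (sk k) τ' (τ m) (hsτ' k) hττ w]
          exact hweq
      set B : ℕ → ℕ → α → Set X := fun k m' a =>
        A' (sk k) a ∩ {w | dist (T (τ m) (sk k) a w) (z a) ≤ 1 / ((m':ℝ) + 1)} with hBdef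
      set O : ℕ → ℕ → α → Set X := fun k m' a =>
        A' (sk k) a ∩ {w | dist (T (τ m) (sk k) a w) (z a) < 1 / ((m':ℝ) + 1)} with hOdef
      have hBcp : ∀ k m' a, IsCompact (B k m' a) := fun k m' a =>
        (hAcp a (sk k)).inter_right
          (isClosed_le ((hcont a (sk k) (τ m) (hsτm k)).dist continuous_const)
            continuous_const)
      have hBstep : ∀ k m' a, B k (m' + 1) a ⊆ B k m' a := by
        intro k m' a
        refine inter_subset_inter_right _ fun w hw => ?_
        simp only [mem_setOf_eq] at hw ⊢
        refine hw.trans ?_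
        rw [div_le_div_iff₀ (by positivity) (by positivity)]
        push_cast
        nlinarith
      have hOB : ∀ k m' a, O k m' a ⊆ B k m' a := by
        intro k m' a
        refine inter_subset_inter_right _ fun w hw => ?_
        simp only [mem_setOf_eq] at hw ⊢
        exact le_of_lt hw
      have hBO : ∀ k m' a, B k (m' + 1) a ⊆ O k m' a := by
        intro k m' a
        refine inter_subset_inter_right _ fun w hw => ?_
        simp only [mem_setOf_eq] at hw ⊢
        refine lt_of_le_of_lt hw ?_
        rw [div_lt_div_iff₀ (by positivity) (by positivity)]
        push_cast
        nlinarith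
      have hBinter : ∀ k a, (⋂ m', B k m' a) =
          A' (sk k) a ∩ {w | T (τ m) (sk k) a w = z a} := by
        intro k a
        ext w
        simp only [mem_iInter, mem_inter_iff, mem_setOf_eq]
        constructor
        · intro h
          refine ⟨(h 0).1, ?_⟩
          rw [← dist_le_zero]
          by_contra hpos
          push_neg at hpos
          obtain ⟨m', hm'⟩ := exists_nat_one_div_lt hpos
          have h2' : dist (T (τ m) (sk k) a w) (z a) ≤ 1 / ((m':ℝ) + 1) := (h m').2
          have h3' : 1 / ((m':ℝ) + 1) < dist (T (τ m) (sk k) a w) (z a) := by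
            exact_mod_cast hm'
          linarith
        · intro ⟨h1, h2⟩ m'
          refine ⟨h1, ?_⟩
          show dist _ _ ≤ _
          rw [h2, dist_self]
          positivity
      have hBne : ∀ k m' a, (B k m' a).Nonempty := by
        intro k m' a
        have h1 : (A' (sk k) a ∩ {w | T (τ m) (sk k) a w = z a}).Nonempty := by
          have := hEne k a
          rw [hEimg k a] at this
          exact this.of_image
        refine h1.mono ?_
        rw [← hBinter k a]
        exact iInter_subset _ m'
      have key : ∀ a, EMetric.infEdist x (G a) = ⨆ k, ⨆ m' : ℕ, ⨅ p : ℕ × ℕ,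
          if dist (T (τ m) (sk k) a (σ (sk k) p a)) (z a) < 1 / ((m':ℝ) + 1)
          then edist x (T τ' (sk k) a (σ (sk k) p a)) else ⊤ := by
        intro a
        rw [hGE a, infEdist_iInter_antitone (fun k => hEcp k a) (fun k => hEstep k a)
          (fun k => hEne k a) x]
        refine iSup_congr fun k => ?_
        have himgB : ∀ m', EMetric.infEdist x (T τ' (sk k) a '' B k m' a) =
            EMetric.infEdist x (T τ' (sk k) a '' B k m' a) := fun _ => rfl
        have hcont' : Continuous (T τ' (sk k) a) := hcont a (sk k) τ' (hsτ' k)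
        have hOopen : ∀ m' : ℕ, IsOpen {w | dist (T (τ m) (sk k) a w) (z a) < 1 / ((m':ℝ) + 1)} :=
          fun m' => isOpen_lt ((hcont a (sk k) (τ m) (hsτm k)).dist continuous_const)
            continuous_const
        have h1 : EMetric.infEdist x (E k a) =
            ⨆ m', EMetric.infEdist x (T τ' (sk k) a '' B k m' a) := by
          rw [hEimg k a, ← hBinter k a,
            ← image_iInter_antitone hcont' (fun m' => hBcp k m' a) (fun m' => hBstep k m' a)]
          exact infEdist_iInter_antitone (fun m' => (hBcp k m' a).image hcont')
            (fun m' => image_mono (hBstep k m' a))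
            (fun m' => (hBne k m' a).image _) x
        have h2 : (⨆ m', EMetric.infEdist x (T τ' (sk k) a '' B k m' a)) =
            ⨆ m', EMetric.infEdist x (T τ' (sk k) a '' O k m' a) := by
          refine le_antisymm (iSup_mono fun m' => EMetric.infEdist_anti
            (image_mono (hOB k m' a))) (iSup_le fun m' => ?_)
          refine le_iSup_of_le (m' + 1) ?_
          exact EMetric.infEdist_anti (image_mono (hBO k m' a))
        have h3 : ∀ m' : ℕ, EMetric.infEdist x (T τ' (sk k) a '' O k m' a) =
            ⨅ p : ℕ × ℕ, if dist (T (τ m) (sk k) a (σ (sk k) p a)) (z a) < 1 / ((m':ℝ) + 1)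
              then edist x (T τ' (sk k) a (σ (sk k) p a)) else ⊤ := by
          intro m'
          have := infEdist_image_inter_open hcont' (hOopen m')
            (fun p => hσA (sk k) p a) (hσd (sk k) a) x
          rw [this]
          simp only [mem_setOf_eq]
        rw [h1, h2]
        exact iSup_congr h3
      simp_rw [key]
      refine Measurable.iSup fun k => Measurable.iSup fun m' => Measurable.iInf fun p => ?_
      refine Measurable.ite ?_ ?_ measurable_const
      · exact measurableSet_lt
          ((hTmeas (τ m) (sk k) (hsτm k) _ (hσm (sk k) p)).dist hz.1) measurable_const
      · exact measurable_const.edist (hTmeas τ' (sk k) (hsτ' k) _ (hσm (sk k) p))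
    have hGmeasD : ∀ x : X, Measurable fun a => infDist x (G a) := fun x =>
      ENNReal.measurable_toReal.comp (hGmeasE x)
    obtain ⟨g, hgm, hgG, _⟩ := exists_measurable_selection G hGcl hGne hGmeasD
      (Classical.arbitrary X) one_pos
    refine ⟨g, ⟨hgm, fun a => (hgG a).1⟩, fun a => ?_⟩
    have := (hgG a).2
    simpa using this
  obtain ⟨z, hzP, hzR⟩ := seq_choice' P R h0 hstep
  have hchain : ∀ (a : α) (m m' : ℕ), m ≤ m' → T (τ m) (τ m') a (z m' a) = z m a := by
    intro a m m' h
    induction m', h using Nat.le_induction with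
    | base => exact hid a (τ m) _
    | succ n hn ih =>
      have h1 : τ (n + 1) ≤ τ n := hτanti (Nat.le_succ n)
      have h2 : τ n ≤ τ m := hτanti hn
      rw [← hco a (τ (n + 1)) (τ n) (τ m) h1 h2, hzR n a, ih]
  -- assembling the trajectory at all real times
  set mo : ℝ → ℕ := fun t => ⌈max 0 (-t)⌉₊ with hmodef
  have hmole : ∀ t : ℝ, τ (mo t) ≤ t := by
    intro t
    have h1 : -t ≤ (⌈max 0 (-t)⌉₊ : ℝ) := (le_max_right 0 (-t)).trans (Nat.le_ceil _)
    simp only [hτdef, hmodef]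
    linarith
  have hmomono : ∀ {s t : ℝ}, s ≤ t → mo t ≤ mo s := by
    intro s t h
    exact Nat.ceil_le_ceil (max_le_max le_rfl (neg_le_neg h))
  refine ⟨fun t a => T t (τ (mo t)) a (z (mo t) a), fun t => ?_, fun a t => ?_, ?_⟩
  · exact hTmeas t _ (hmole t) _ (hzP (mo t)).1
  · exact hAinv a (τ (mo t)) t (hmole t)
      ⟨z (mo t) a, hFsubA (τ (mo t)) a ((hzP (mo t)).2 a), rfl⟩
  · intro a s t hst
    show T t s a (T s (τ (mo s)) a (z (mo s) a)) = T t (τ (mo t)) a (z (mo t) a)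
    have h1 : τ (mo s) ≤ s := hmole s
    have h2 : τ (mo t) ≤ t := hmole t
    have h3 : τ (mo s) ≤ τ (mo t) := hτanti (hmomono hst)
    rw [hco a (τ (mo s)) s t h1 hst]
    rw [← hchain a (mo t) (mo s) (hmomono hst)]
    rw [hco a (τ (mo s)) (τ (mo t)) t h3 h2]

end AuxiliaryLemmas

/-- given a compact forward invariant family `A t ω` for the stochastic flow
`S` (with the flow identities (i), (ii), (iv) holding on the full-measure set `Ω₀`), there
exist measurable selections `x_t : Ω₀ → X` with `x_t(ω) ∈ A(t,ω)` and
`S(t,s;ω) x_s(ω) = x_t(ω)` for all `ω ∈ Ω₀` and all `s ≤ t`. -/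
theorem stmt4 {Ω X : Type*} [MeasurableSpace Ω] [MetricSpace X] [CompleteSpace X]
    [TopologicalSpace.SeparableSpace X] [MeasurableSpace X] [BorelSpace X]
    (ℙ : Measure Ω) [IsProbabilityMeasure ℙ]
    (S : ℝ → ℝ → Ω → X → X) (hS : IsStochasticFlow ℙ S)
    (A : ℝ → Ω → Set X)
    (Ω₀ : Set Ω) (hΩ₀m : MeasurableSet Ω₀) (hΩ₀ : ℙ Ω₀ = 1)
    (hflow : ∀ ω ∈ Ω₀,
      (∀ s r t : ℝ, s ≤ r → r ≤ t → ∀ x : X, S t r ω (S r s ω x) = S t s ω x) ∧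
      (∀ s t : ℝ, s ≤ t → Continuous fun x : X => S t s ω x) ∧
      (∀ t : ℝ, ∀ x : X, S t t ω x = x))
    (ha : ∀ (x : X) (t : ℝ), Measurable fun ω => Metric.infDist x (A t ω))
    (hb : ∀ ω ∈ Ω₀, ∀ t : ℝ, (A t ω).Nonempty ∧ IsCompact (A t ω))
    (hc : ∀ ω ∈ Ω₀, ∀ s t : ℝ, s ≤ t → S t s ω '' A s ω ⊆ A t ω) :
    ∃ x : ℝ → Ω → X,
      (∀ t : ℝ, Measurable fun ω : Ω₀ => x t ω.1) ∧
      (∀ ω ∈ Ω₀, ∀ t : ℝ, x t ω ∈ A t ω) ∧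
      (∀ ω ∈ Ω₀, ∀ s t : ℝ, s ≤ t → S t s ω (x s ω) = x t ω) := by
  classical
  haveI : SecondCountableTopology X := UniformSpace.secondCountable_of_separable X
  have hΩne : Ω₀.Nonempty := by
    rcases Set.eq_empty_or_nonempty Ω₀ with h | h
    · exfalso
      rw [h] at hΩ₀
      simp at hΩ₀
    · exact h
  obtain ⟨ω₀, hω₀⟩ := hΩne
  haveI hXne : Nonempty X := ⟨(hb ω₀ hω₀ 0).1.choose⟩
  have hTmeas : ∀ (t s : ℝ), s ≤ t → ∀ z : ↥Ω₀ → X, Measurable z →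
      Measurable fun a : ↥Ω₀ => S t s a.1 (z a) := by
    intro t s hst z hz
    have hm1 : ∀ x : X, Measurable fun a : ↥Ω₀ => S t s a.1 x := by
      intro x
      exact (hS.2 t x).comp ((measurable_const.prodMk measurable_subtype_coe) :
        Measurable fun a : ↥Ω₀ => ((⟨s, hst⟩ : {s' : ℝ // s' ≤ t}), (a : Ω)))
    have hj : Measurable (Function.uncurry fun (x : X) (a : ↥Ω₀) => S t s a.1 x) :=
      measurable_uncurry_of_continuous_of_measurable
        (fun a => (hflow a.1 a.2).2.1 s t hst) hm1
    exact hj.comp (hz.prodMk measurable_id)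
  obtain ⟨y, hym, hyA, hyflow⟩ := flow_selection (fun t s (a : ↥Ω₀) => S t s a.1)
    (fun t a => A t a.1)
    (fun a => (hflow a.1 a.2).1) (fun a => (hflow a.1 a.2).2.1) (fun a => (hflow a.1 a.2).2.2)
    hTmeas (fun a t => (hb a.1 a.2 t).1) (fun a t => (hb a.1 a.2 t).2)
    (fun a => hc a.1 a.2) (fun x t => (ha x t).comp measurable_subtype_coe)
  refine ⟨fun t ω => if h : ω ∈ Ω₀ then y t ⟨ω, h⟩ else Classical.arbitrary X, ?_, ?_, ?_⟩
  · intro t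
    have heq : (fun a : ↥Ω₀ => if h : (a : Ω) ∈ Ω₀ then y t ⟨(a : Ω), h⟩
        else Classical.arbitrary X) = fun a : ↥Ω₀ => y t a := by
      funext a
      rw [dif_pos a.2]
    show Measurable fun a : ↥Ω₀ => if h : (a : Ω) ∈ Ω₀ then y t ⟨(a : Ω), h⟩
        else Classical.arbitrary X
    rw [heq]
    exact hym t
  · intro ω hω t
    simp only [dif_pos hω]
    exact hyA ⟨ω, hω⟩ t
  · intro ω hω s t hst
    simp only [dif_pos hω]
    exact hyflow ⟨ω, hω⟩ s t hst
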